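/- arXiv:1709.09331 — 3 statements merged into one kernel-verified Lean document; each statement's English description precedes it below -/
import Mathlib

section
/- Let P be a finite poset and let e_1, …, e_k be pairwise incomparable elements of P. Then for every 1 ≤ i ≤ k, τ_{e_1}^* ∘ τ_{e_2}^* ∘ ⋯ ∘ τ_{e_i}^* = η_{{e_1,…,e_i}} ∘ t_{e_1} ∘ t_{e_2} ∘ ⋯ ∘ t_{e_i} ∘ η_{{e_1,…,e_i}}^{-1}, where for S ⊆ P, η_S := t_{x_1} ∘ ⋯ ∘ t_{x_m} for (x_1, …, x_m) any linear extension of the subposet {x ∈ P | x < y for some y ∈ S}, and τ_e^* := η_{{e}} ∘ t_e ∘ η_{{e}}^{-1}. -/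
open scoped Classical

variable {P : Type*} [PartialOrder P]

abbrev OrderIdealSub (P : Type*) [PartialOrder P] : Type _ := {I : Set P // IsLowerSet I}

abbrev AntichainSub (P : Type*) [PartialOrder P] : Type _ := {A : Set P // IsAntichain (· ≤ ·) A}

noncomputable def togFun (e : P) (I : OrderIdealSub P) : OrderIdealSub P :=
  if _h : e ∈ I.1 then
    if h2 : IsLowerSet (I.1 \ {e}) then ⟨I.1 \ {e}, h2⟩ else I
  else
    if h2 : IsLowerSet (insert e I.1) then ⟨insert e I.1, h2⟩ else I

noncomputable def atogFun (e : P) (A : AntichainSub P) : AntichainSub P :=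
  if _h : e ∈ A.1 then ⟨A.1 \ {e}, A.2.subset Set.diff_subset⟩
  else if h2 : IsAntichain (· ≤ ·) (insert e A.1) then ⟨insert e A.1, h2⟩
  else A

def idealOf (A : AntichainSub P) : OrderIdealSub P :=
  ⟨{x | ∃ y ∈ A.1, x ≤ y}, fun _a _b hba ha => by
    obtain ⟨y, hy, h⟩ := ha
    exact ⟨y, hy, hba.trans h⟩⟩

def listComp {α : Type*} (fs : List (α → α)) : α → α := fs.foldr (· ∘ ·) id

theorem togFun_involutive (e : P) : Function.Involutive (togFun (P := P) e) := by
  intro I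
  unfold togFun
  by_cases h : e ∈ I.1
  · rw [dif_pos h]
    by_cases h2 : IsLowerSet (I.1 \ {e})
    · rw [dif_pos h2]
      have hne : e ∉ (⟨I.1 \ {e}, h2⟩ : OrderIdealSub P).1 := fun hc => hc.2 rfl
      rw [dif_neg hne]
      have hins : insert e (I.1 \ {e}) = I.1 := by
        rw [Set.insert_diff_singleton, Set.insert_eq_self.mpr h]
      have h3 : IsLowerSet (insert e ((⟨I.1 \ {e}, h2⟩ : OrderIdealSub P)).1) := by
        show IsLowerSet (insert e (I.1 \ {e})); rw [hins]; exact I.2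
      rw [dif_pos h3]
      exact Subtype.ext hins
    · rw [dif_neg h2, dif_pos h, dif_neg h2]
  · rw [dif_neg h]
    by_cases h2 : IsLowerSet (insert e I.1)
    · rw [dif_pos h2]
      have hme : e ∈ (⟨insert e I.1, h2⟩ : OrderIdealSub P).1 := Set.mem_insert e I.1
      rw [dif_pos hme]
      have hdel : (insert e I.1) \ {e} = I.1 := by
        rw [Set.insert_sdiff_self_of_notMem h]
      have h3 : IsLowerSet ((⟨insert e I.1, h2⟩ : OrderIdealSub P).1 \ {e}) := by
        show IsLowerSet ((insert e I.1) \ {e}); rw [hdel]; exact I.2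
      rw [dif_pos h3]
      exact Subtype.ext hdel
    · rw [dif_neg h2, dif_neg h, dif_neg h2]

theorem atogFun_involutive (e : P) : Function.Involutive (atogFun (P := P) e) := by
  intro A
  unfold atogFun
  by_cases h : e ∈ A.1
  · rw [dif_pos h]
    have hne : e ∉ (⟨A.1 \ {e}, A.2.subset Set.diff_subset⟩ : AntichainSub P).1 :=
      fun hc => hc.2 rfl
    rw [dif_neg hne]
    have hins : insert e (A.1 \ {e}) = A.1 := by
      rw [Set.insert_diff_singleton, Set.insert_eq_self.mpr h]
    have h2 : IsAntichain (· ≤ ·)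
        (insert e ((⟨A.1 \ {e}, A.2.subset Set.diff_subset⟩ : AntichainSub P)).1) := by
      show IsAntichain (· ≤ ·) (insert e (A.1 \ {e})); rw [hins]; exact A.2
    rw [dif_pos h2]
    exact Subtype.ext hins
  · rw [dif_neg h]
    by_cases h2 : IsAntichain (· ≤ ·) (insert e A.1)
    · rw [dif_pos h2]
      have hme : e ∈ (⟨insert e A.1, h2⟩ : AntichainSub P).1 := Set.mem_insert e A.1
      rw [dif_pos hme]
      have hdel : (insert e A.1) \ {e} = A.1 := by
        rw [Set.insert_sdiff_self_of_notMem h]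
      exact Subtype.ext hdel
    · rw [dif_neg h2, dif_neg h, dif_neg h2]

noncomputable def togPerm (e : P) : Equiv.Perm (OrderIdealSub P) :=
  (togFun_involutive e).toPerm _

noncomputable def atogPerm (e : P) : Equiv.Perm (AntichainSub P) :=
  (atogFun_involutive e).toPerm _

def IsLinExtListOn (S : Set P) (l : List P) : Prop :=
  l.Nodup ∧ (∀ x : P, x ∈ l ↔ x ∈ S) ∧
    ∀ i j : Fin l.length, l.get i < l.get j → (i : ℕ) < (j : ℕ)

noncomputable def RowJ (I : OrderIdealSub P) : OrderIdealSub P :=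
  ⟨{x | ∃ m, (m ∉ I.1 ∧ ∀ z, z ∉ I.1 → z ≤ m → z = m) ∧ x ≤ m}, fun _a _b hba ha => by
    obtain ⟨m, hm, h⟩ := ha
    exact ⟨m, hm, hba.trans h⟩⟩

noncomputable def RowA (A : AntichainSub P) : AntichainSub P :=
  ⟨{x | x ∉ (idealOf A).1 ∧ ∀ z, z ∉ (idealOf A).1 → z ≤ x → z = x}, by
    intro a ha b hb hne hab
    exact hne (hb.2 a ha.1 hab)⟩

noncomputable def etaJPerm {P : Type*} [PartialOrder P] (l : List P) :
    Equiv.Perm (OrderIdealSub P) := (l.map togPerm).prod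


-- ===== auxiliary lemmas =====

lemma lower_insert_iff (I : OrderIdealSub P) (x : P) :
    IsLowerSet (insert x I.1) ↔ ∀ w, w < x → w ∈ I.1 := by
  constructor
  · intro h w hw
    have := h (le_of_lt hw) (Set.mem_insert x I.1)
    rcases this with h' | h'
    · exact absurd h' (ne_of_lt hw)
    · exact h'
  · intro h a b hba hb
    rcases hb with rfl | hb
    · rcases lt_or_eq_of_le hba with h' | rfl
      · exact Set.mem_insert_of_mem _ (h b h')
      · exact Set.mem_insert _ _
    · exact Set.mem_insert_of_mem _ (I.2 hba hb)

lemma lower_diff_iff (I : OrderIdealSub P) (x : P) :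
    IsLowerSet (I.1 \ {x}) ↔ ∀ z ∈ I.1, ¬ x < z := by
  constructor
  · intro h z hz hxz
    have hzm : z ∈ I.1 \ {x} := ⟨hz, fun he => (ne_of_lt hxz) (by rw [he])⟩
    have : x ∈ I.1 \ {x} := h (le_of_lt hxz) hzm
    exact this.2 rfl
  · intro h a b hba hb
    refine ⟨I.2 hba hb.1, ?_⟩
    intro hbx
    rw [Set.mem_singleton_iff] at hbx
    subst hbx
    rcases lt_or_eq_of_le hba with h' | rfl
    · exact h a hb.1 h'
    · exact hb.2 rfl

def togAct (x : P) (I : OrderIdealSub P) : Prop :=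
  (x ∈ I.1 ∧ ∀ z ∈ I.1, ¬ x < z) ∨ (x ∉ I.1 ∧ ∀ w, w < x → w ∈ I.1)

lemma togFun_set (x : P) (I : OrderIdealSub P) :
    (togFun x I).1 = symmDiff I.1 (if togAct x I then {x} else ∅) := by
  unfold togFun
  by_cases h : x ∈ I.1
  · rw [dif_pos h]
    by_cases h2 : IsLowerSet (I.1 \ {x})
    · have ha : togAct x I := Or.inl ⟨h, (lower_diff_iff I x).mp h2⟩
      rw [dif_pos h2, if_pos ha]
      rw [Set.symmDiff_def]
      have hx : {x} \ I.1 = (∅ : Set P) := by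
        ext a; simp only [Set.mem_diff, Set.mem_singleton_iff, Set.mem_empty_iff_false,
          iff_false, not_and, not_not]
        rintro rfl; exact h
      rw [hx, Set.union_empty]
    · rw [dif_neg h2]
      have hna : ¬ togAct x I := by
        rintro (⟨_, hc⟩ | ⟨hc, _⟩)
        · exact h2 ((lower_diff_iff I x).mpr hc)
        · exact hc h
      rw [if_neg hna, ← Set.bot_eq_empty, symmDiff_bot]
  · rw [dif_neg h]
    by_cases h2 : IsLowerSet (insert x I.1)
    · have ha : togAct x I := Or.inr ⟨h, (lower_insert_iff I x).mp h2⟩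
      rw [dif_pos h2, if_pos ha]
      rw [Set.symmDiff_def]
      have h1 : I.1 \ {x} = I.1 := Set.diff_singleton_eq_self h
      have hx : {x} \ I.1 = ({x} : Set P) := by
        ext a; simp only [Set.mem_diff, Set.mem_singleton_iff, and_iff_left_iff_imp]
        rintro rfl; exact h
      rw [h1, hx, Set.union_singleton]
    · rw [dif_neg h2]
      have hna : ¬ togAct x I := by
        rintro (⟨hc, _⟩ | ⟨_, hc⟩)
        · exact h hc
        · exact h2 ((lower_insert_iff I x).mpr hc)
      rw [if_neg hna, ← Set.bot_eq_empty, symmDiff_bot]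

lemma mem_togFun_of_ne {x y : P} (hyx : y ≠ x) (I : OrderIdealSub P) :
    y ∈ (togFun x I).1 ↔ y ∈ I.1 := by
  rw [togFun_set]
  by_cases h : togAct x I
  · rw [if_pos h]
    simp [Set.mem_symmDiff, hyx]
  · rw [if_neg h, ← Set.bot_eq_empty, symmDiff_bot]

lemma togAct_invar {x y : P} (hne : x ≠ y) (hxy : ¬ x < y) (hyx : ¬ y < x)
    (I : OrderIdealSub P) : togAct x (togFun y I) ↔ togAct x I := by
  have hmem : x ∈ (togFun y I).1 ↔ x ∈ I.1 := mem_togFun_of_ne hne I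
  have hrem : (∀ z ∈ (togFun y I).1, ¬ x < z) ↔ ∀ z ∈ I.1, ¬ x < z := by
    constructor
    · intro h z hz hxz
      have hzy : z ≠ y := by rintro rfl; exact hxy hxz
      exact h z ((mem_togFun_of_ne hzy I).mpr hz) hxz
    · intro h z hz hxz
      have hzy : z ≠ y := by rintro rfl; exact hxy hxz
      exact h z ((mem_togFun_of_ne hzy I).mp hz) hxz
  have hins : (∀ w, w < x → w ∈ (togFun y I).1) ↔ ∀ w, w < x → w ∈ I.1 := by
    constructor
    · intro h w hw
      have hwy : w ≠ y := by rintro rfl; exact hyx hw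
      exact (mem_togFun_of_ne hwy I).mp (h w hw)
    · intro h w hw
      have hwy : w ≠ y := by rintro rfl; exact hyx hw
      exact (mem_togFun_of_ne hwy I).mpr (h w hw)
  unfold togAct
  rw [hmem, hrem, hins]

lemma togFun_comm {x y : P} (h1 : ¬ x ≤ y) (h2 : ¬ y ≤ x) (I : OrderIdealSub P) :
    togFun x (togFun y I) = togFun y (togFun x I) := by
  have hne : x ≠ y := by rintro rfl; exact h1 le_rfl
  have hxy : ¬ x < y := fun h => h1 h.le
  have hyx : ¬ y < x := fun h => h2 h.le
  apply Subtype.ext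
  rw [togFun_set, togFun_set, togFun_set, togFun_set]
  rw [if_congr (togAct_invar hne hxy hyx I) rfl rfl,
      if_congr (togAct_invar hne.symm hyx hxy I) rfl rfl]
  rw [symmDiff_assoc, symmDiff_assoc,
      symmDiff_comm (if togAct y I then ({y} : Set P) else ∅)]


lemma togPerm_apply (e : P) (I : OrderIdealSub P) : togPerm e I = togFun e I := rfl

lemma togPerm_commute {x y : P} (h1 : ¬ x ≤ y) (h2 : ¬ y ≤ x) :
    Commute (togPerm (P := P) x) (togPerm y) := by
  apply Equiv.ext
  intro I
  simp only [Equiv.Perm.mul_apply, togPerm_apply]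
  exact togFun_comm h1 h2 I

lemma etaJPerm_nil : etaJPerm (P := P) [] = 1 := rfl

lemma etaJPerm_cons (a : P) (l : List P) :
    etaJPerm (a :: l) = togPerm a * etaJPerm l := by
  simp [etaJPerm]

lemma etaJPerm_append (l₁ l₂ : List P) :
    etaJPerm (l₁ ++ l₂) = etaJPerm l₁ * etaJPerm l₂ := by
  simp [etaJPerm]

lemma commute_etaJPerm {g : Equiv.Perm (OrderIdealSub P)} {l : List P}
    (h : ∀ x ∈ l, Commute g (togPerm x)) : Commute g (etaJPerm l) := by
  apply Commute.list_prod_right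
  intro p hp
  rw [List.mem_map] at hp
  obtain ⟨x, hx, rfl⟩ := hp
  exact h x hx

/-- the pairwise reformulation of the linear-extension condition -/
def LinL (S : Set P) (l : List P) : Prop :=
  l.Nodup ∧ (∀ x : P, x ∈ l ↔ x ∈ S) ∧ l.Pairwise (fun a b => ¬ b < a)

lemma isLinExt_iff_linL (S : Set P) (l : List P) : IsLinExtListOn S l ↔ LinL S l := by
  unfold IsLinExtListOn LinL
  refine and_congr_right fun _ => and_congr_right fun _ => ?_
  rw [List.pairwise_iff_get]
  constructor
  · intro h i j hij hlt
    exact absurd (h _ _ hlt) (by omega)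
  · intro h i j hlt
    rcases lt_trichotomy (i : ℕ) (j : ℕ) with hc | hc | hc
    · exact hc
    · exact absurd hlt (by cases Fin.ext hc; exact lt_irrefl _)
    · exact absurd hlt (h j i (Fin.lt_def.mpr hc))

/-- η only depends on the underlying set, given the linear-extension condition -/
lemma eta_eq_of_perm : ∀ (l l' : List P), l.Nodup → l'.Nodup →
    (∀ x, x ∈ l ↔ x ∈ l') → l.Pairwise (fun a b => ¬ b < a) →
    l'.Pairwise (fun a b => ¬ b < a) → etaJPerm l = etaJPerm l'
  | [], l', _, _, hm, _, _ => by
    have : l' = [] := List.eq_nil_iff_forall_not_mem.mpr fun x hx => by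
      simpa using (hm x).mpr hx
    rw [this]
  | a :: t, l', hn, hn', hm, hp, hp' => by
    have ha : a ∈ l' := (hm a).mp List.mem_cons_self
    obtain ⟨u, v, rfl⟩ := List.append_of_mem ha
    have hnuv : (a :: (u ++ v)).Nodup := List.nodup_middle.mp hn'
    have hanuv : a ∉ u ++ v := (List.nodup_cons.mp hnuv).1
    have hu : ∀ x ∈ u, ¬ x ≤ a ∧ ¬ a ≤ x := by
      intro x hx
      have hxne : x ≠ a := fun h => hanuv (h ▸ List.mem_append_left v hx)
      have hxt : x ∈ t := by
        have := (hm x).mpr (List.mem_append_left _ hx)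
        rcases List.mem_cons.mp this with h | h
        · exact absurd h hxne
        · exact h
      have h1 : ¬ x < a := (List.pairwise_cons.mp hp).1 x hxt
      have h2 : ¬ a < x := by
        have := (List.pairwise_append.mp hp').2.2 x hx a List.mem_cons_self
        exact this
      constructor
      · intro h; exact h1 (lt_of_le_of_ne h hxne)
      · intro h; exact h2 (lt_of_le_of_ne h (Ne.symm hxne))
    have hcomm : Commute (togPerm (P := P) a) (etaJPerm u) :=
      commute_etaJPerm fun x hx => togPerm_commute (hu x hx).2 (hu x hx).1
    have hmem' : ∀ x, x ∈ t ↔ x ∈ u ++ v := by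
      intro x
      constructor
      · intro hx
        have hxa : x ≠ a := fun h => (List.nodup_cons.mp hn).1 (h ▸ hx)
        have := (hm x).mp (List.mem_cons_of_mem a hx)
        rw [List.mem_append] at this ⊢
        rcases this with h | h
        · exact Or.inl h
        · rcases List.mem_cons.mp h with h | h
          · exact absurd h hxa
          · exact Or.inr h
      · intro hx
        have hxa : x ≠ a := fun h => hanuv (h ▸ hx)
        have : x ∈ u ++ a :: v := by
          rw [List.mem_append] at hx ⊢
          rcases hx with h | h
          · exact Or.inl h
          · exact Or.inr (List.mem_cons_of_mem a h)
        rcases List.mem_cons.mp ((hm x).mpr this) with h | h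
        · exact absurd h hxa
        · exact h
    have hsub : (u ++ v).Sublist (u ++ a :: v) :=
      List.Sublist.append (List.Sublist.refl u) (List.sublist_cons_self a v)
    have ih := eta_eq_of_perm t (u ++ v) (List.nodup_cons.mp hn).2
      (List.nodup_cons.mp hnuv).2 hmem' (List.pairwise_cons.mp hp).2 (hp'.sublist hsub)
    rw [etaJPerm_cons, ih, etaJPerm_append, etaJPerm_append, etaJPerm_cons,
        ← mul_assoc, hcomm.eq, mul_assoc]
termination_by l => l.length


lemma linL_congr {S T : Set P} {l : List P} (hST : ∀ x, x ∈ S ↔ x ∈ T) (h : LinL S l) :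
    LinL T l :=
  ⟨h.1, fun x => (h.2.1 x).trans (hST x), h.2.2⟩

lemma eta_eq_linL {S : Set P} {l l' : List P} (h : LinL S l) (h' : LinL S l') :
    etaJPerm l = etaJPerm l' :=
  eta_eq_of_perm l l' h.1 h'.1 (fun x => (h.2.1 x).trans (h'.2.1 x).symm) h.2.2 h'.2.2

lemma linL_filter {S : Set P} {l : List P} (h : LinL S l) (p : P → Prop) :
    LinL {x | x ∈ S ∧ p x} (l.filter fun x => decide (p x)) := by
  refine ⟨h.1.filter _, fun x => ?_, h.2.2.sublist List.filter_sublist⟩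
  rw [List.mem_filter, decide_eq_true_iff, h.2.1]
  rfl

lemma linL_append {S T : Set P} {l₁ l₂ : List P} (h1 : LinL S l₁) (h2 : LinL T l₂)
    (hdisj : ∀ x, x ∈ S → x ∈ T → False) (hcross : ∀ x ∈ S, ∀ y ∈ T, ¬ y < x) :
    LinL (S ∪ T) (l₁ ++ l₂) := by
  refine ⟨?_, fun x => ?_, ?_⟩
  · rw [List.nodup_append]
    exact ⟨h1.1, h2.1, fun a ha b hb hab => by
      subst hab; exact hdisj a ((h1.2.1 a).mp ha) ((h2.2.1 a).mp hb)⟩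
  · rw [List.mem_append, h1.2.1, h2.2.1]; rfl
  · rw [List.pairwise_append]
    exact ⟨h1.2.2, h2.2.2, fun x hx y hy =>
      hcross x ((h1.2.1 x).mp hx) y ((h2.2.1 y).mp hy)⟩

lemma conj_glue {G : Type*} [Group G] (c A B t T' : G) (hAB : Commute A B)
    (htB : Commute t B) (hAT : Commute A T') :
    (c * A) * t * (c * A)⁻¹ * ((c * B) * T' * (c * B)⁻¹)
      = (c * (A * B)) * (t * T') * (c * (A * B))⁻¹ := by
  have h1 : A⁻¹ * B = B * A⁻¹ := (hAB.inv_left).eq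
  have h2 : t * B = B * t := htB.eq
  have h3 : A⁻¹ * T' = T' * A⁻¹ := (hAT.inv_left).eq
  have h4 : A⁻¹ * B⁻¹ = B⁻¹ * A⁻¹ := (hAB.inv_left.inv_right).eq
  have key : A * t * A⁻¹ * B * T' * B⁻¹ = A * B * t * T' * B⁻¹ * A⁻¹ := by
    calc A * t * A⁻¹ * B * T' * B⁻¹
        = A * t * (A⁻¹ * B) * T' * B⁻¹ := by rw [mul_assoc (A * t)]
      _ = A * (t * B) * A⁻¹ * T' * B⁻¹ := by rw [h1, ← mul_assoc, mul_assoc A t, ← mul_assoc]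
      _ = A * B * t * (A⁻¹ * T') * B⁻¹ := by
            rw [h2, ← mul_assoc, mul_assoc (A * B * t)]
      _ = A * B * t * T' * (A⁻¹ * B⁻¹) := by rw [h3, ← mul_assoc, mul_assoc (A * B * t * T')]
      _ = A * B * t * T' * B⁻¹ * A⁻¹ := by rw [h4, ← mul_assoc]
  have e1 : (c * A) * t * (c * A)⁻¹ * ((c * B) * T' * (c * B)⁻¹)
      = c * (A * t * A⁻¹ * B * T' * B⁻¹) * c⁻¹ := by group
  have e2 : (c * (A * B)) * (t * T') * (c * (A * B))⁻¹
      = c * (A * B * t * T' * B⁻¹ * A⁻¹) * c⁻¹ := by group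
  rw [e1, e2, key]

/-- For pairwise incomparable `e_1, …, e_i`,
`τ_{e_1}^* ⋯ τ_{e_i}^* = η_{{e_1,…,e_i}} t_{e_1} ⋯ t_{e_i} η_{{e_1,…,e_i}}⁻¹`. -/
theorem tauStar_prod_eq_conj
    (P : Type*) [PartialOrder P] [Fintype P] (es : List P)
    (hpair : es.Pairwise fun x y => ¬ x ≤ y ∧ ¬ y ≤ x)
    (lext : P → List P) (hlext : ∀ e ∈ es, IsLinExtListOn {x : P | x < e} (lext e))
    (L : List P) (hL : IsLinExtListOn {x : P | ∃ y ∈ es, x < y} L) :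
    (es.map fun e => etaJPerm (lext e) * togPerm e * (etaJPerm (lext e))⁻¹).prod
      = etaJPerm L * (es.map togPerm).prod * (etaJPerm L)⁻¹ := by
  induction es generalizing L with
  | nil => simp [etaJPerm]
  | cons e es' ih =>
    obtain ⟨hpe, hpair'⟩ := List.pairwise_cons.mp hpair
    have hLl : LinL {x : P | x < e ∨ ∃ y ∈ es', x < y} L := by
      refine linL_congr (fun x => ?_) ((isLinExt_iff_linL _ _).mp hL)
      simp only [Set.mem_setOf_eq, List.mem_cons]
      constructor
      · rintro ⟨y, rfl | hy, hxy⟩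
        · exact Or.inl hxy
        · exact Or.inr ⟨y, hy, hxy⟩
      · rintro (hx | ⟨y, hy, hxy⟩)
        · exact ⟨e, Or.inl rfl, hx⟩
        · exact ⟨y, Or.inr hy, hxy⟩
    -- incomparability consequences
    have hBe : ∀ b : P, ¬ b < e → (∃ y ∈ es', b < y) → ¬ e ≤ b ∧ ¬ b ≤ e := by
      rintro b hbD ⟨f, hf, hbf⟩
      constructor
      · intro heb
        exact (hpe f hf).1 (le_of_lt (lt_of_le_of_lt heb hbf))
      · intro hbe
        rcases lt_or_eq_of_le hbe with h | rfl
        · exact hbD h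
        · exact (hpe f hf).1 (le_of_lt hbf)
    have hAf : ∀ a : P, a < e → ¬ (∃ y ∈ es', a < y) → ∀ f ∈ es', ¬ a ≤ f ∧ ¬ f ≤ a := by
      intro a haD haS f hf
      constructor
      · intro haf
        rcases lt_or_eq_of_le haf with h | heq
        · exact haS ⟨f, hf, h⟩
        · exact (hpe f hf).2 (heq ▸ le_of_lt haD)
      · intro hfa
        exact (hpe f hf).2 (le_of_lt (lt_of_le_of_lt hfa haD))
    have hABi : ∀ a : P, a < e → ¬ (∃ y ∈ es', a < y) →
        ∀ b : P, ¬ b < e → (∃ y ∈ es', b < y) → ¬ a ≤ b ∧ ¬ b ≤ a := by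
      rintro a haD haS b hbD ⟨f, hf, hbf⟩
      constructor
      · intro hab
        rcases lt_or_eq_of_le hab with h | rfl
        · exact haS ⟨f, hf, lt_trans h hbf⟩
        · exact hbD haD
      · intro hba
        exact hbD (lt_of_le_of_lt hba haD)
    -- the three filtered lists
    obtain ⟨lC, hC⟩ : ∃ l, LinL {x : P | x < e ∧ ∃ y ∈ es', x < y} l := by
      refine ⟨_, linL_congr (fun x => ?_) (linL_filter hLl fun x => (x < e) ∧ ∃ y ∈ es', x < y)⟩
      simp only [Set.mem_setOf_eq]
      tauto
    obtain ⟨lA, hA⟩ : ∃ l, LinL {x : P | x < e ∧ ¬ ∃ y ∈ es', x < y} l := by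
      refine ⟨_, linL_congr (fun x => ?_) (linL_filter hLl fun x => (x < e) ∧ ¬ ∃ y ∈ es', x < y)⟩
      simp only [Set.mem_setOf_eq]
      tauto
    obtain ⟨lB, hB⟩ : ∃ l, LinL {x : P | ¬ (x < e) ∧ ∃ y ∈ es', x < y} l := by
      refine ⟨_, linL_congr (fun x => ?_) (linL_filter hLl fun x => ¬ (x < e) ∧ ∃ y ∈ es', x < y)⟩
      simp only [Set.mem_setOf_eq]
      tauto
    have hCA : LinL {x : P | x < e} (lC ++ lA) := by
      refine linL_congr (fun x => ?_) (linL_append hC hA (fun x hx hy => hy.2 hx.2) ?_)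
      · simp only [Set.mem_union, Set.mem_setOf_eq]
        constructor
        · rintro (h | h) <;> exact h.1
        · intro h
          by_cases hs : ∃ y ∈ es', x < y
          · exact Or.inl ⟨h, hs⟩
          · exact Or.inr ⟨h, hs⟩
      · rintro x ⟨hxD, f, hf, hxf⟩ y ⟨hyD, hyS⟩ hyx
        exact hyS ⟨f, hf, lt_trans hyx hxf⟩
    have hCB : LinL {x : P | ∃ y ∈ es', x < y} (lC ++ lB) := by
      refine linL_congr (fun x => ?_) (linL_append hC hB (fun x hx hy => hy.1 hx.1) ?_)
      · simp only [Set.mem_union, Set.mem_setOf_eq]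
        constructor
        · rintro (h | h) <;> exact h.2
        · intro h
          by_cases hd : x < e
          · exact Or.inl ⟨hd, h⟩
          · exact Or.inr ⟨hd, h⟩
      · rintro x ⟨hxD, hxS⟩ y ⟨hyD, hyS⟩ hyx
        exact hyD (lt_trans hyx hxD)
    have hCAB : LinL {x : P | x < e ∨ ∃ y ∈ es', x < y} (lC ++ lA ++ lB) := by
      refine linL_congr (fun x => ?_)
        (linL_append hCA hB (fun x hx hy => hy.1 hx) ?_)
      · simp only [Set.mem_union, Set.mem_setOf_eq]
        constructor
        · rintro (h | h)
          · exact Or.inl h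
          · exact Or.inr h.2
        · rintro (h | h)
          · exact Or.inl h
          · by_cases hd : x < e
            · exact Or.inl hd
            · exact Or.inr ⟨hd, h⟩
      · rintro x hx y ⟨hyD, hyS⟩ hyx
        exact hyD (lt_trans hyx hx)
    -- eta decompositions
    have hηL : etaJPerm L = etaJPerm lC * (etaJPerm lA * etaJPerm lB) := by
      rw [eta_eq_linL hLl hCAB, etaJPerm_append, etaJPerm_append, mul_assoc]
    have hηD : etaJPerm (lext e) = etaJPerm lC * etaJPerm lA := by
      have h0 : LinL {x : P | x < e} (lext e) :=
        (isLinExt_iff_linL _ _).mp (hlext e List.mem_cons_self)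
      rw [eta_eq_linL h0 hCA, etaJPerm_append]
    -- induction hypothesis
    have ihres := ih hpair' (fun f hf => hlext f (List.mem_cons_of_mem e hf))
      (lC ++ lB) ((isLinExt_iff_linL _ _).mpr hCB)
    -- commutation facts
    have memA : ∀ a ∈ lA, a < e ∧ ¬ ∃ y ∈ es', a < y := fun a ha => (hA.2.1 a).mp ha
    have memB : ∀ b ∈ lB, ¬ (b < e) ∧ ∃ y ∈ es', b < y := fun b hb => (hB.2.1 b).mp hb
    have hABc : Commute (etaJPerm lA) (etaJPerm lB) := by
      refine commute_etaJPerm fun b hb => ?_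
      refine (commute_etaJPerm fun a ha => ?_).symm
      obtain ⟨haD, haS⟩ := memA a ha
      obtain ⟨hbD, hbS⟩ := memB b hb
      obtain ⟨h1, h2⟩ := hABi a haD haS b hbD hbS
      exact (togPerm_commute h2 h1)
    have htBc : Commute (togPerm (P := P) e) (etaJPerm lB) := by
      refine commute_etaJPerm fun b hb => ?_
      obtain ⟨hbD, hbS⟩ := memB b hb
      obtain ⟨h1, h2⟩ := hBe b hbD hbS
      exact togPerm_commute h1 h2
    have hATc : Commute (etaJPerm lA) ((es'.map togPerm).prod) := by
      refine Commute.list_prod_right _ _ fun p hp => ?_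
      rw [List.mem_map] at hp
      obtain ⟨f, hf, rfl⟩ := hp
      refine (commute_etaJPerm fun a ha => ?_).symm
      obtain ⟨haD, haS⟩ := memA a ha
      obtain ⟨h1, h2⟩ := hAf a haD haS f hf
      exact togPerm_commute h2 h1
    rw [List.map_cons, List.prod_cons, List.map_cons, List.prod_cons, ihres,
      etaJPerm_append, hηD, hηL]
    exact conj_glue (etaJPerm lC) (etaJPerm lA) (etaJPerm lB) (togPerm e)
      ((es'.map togPerm).prod) hABc htBc hATc
end

section
/- Let P be a finite poset. There is a group isomorphism from the antichain toggle group Tog_A(P) (the subgroup of permutations of A(P) generated by {τ_e | e ∈ P}) to the order ideal toggle group Tog_J(P) (the subgroup of permutations of J(P) generated by {t_e | e ∈ P}) sending τ_e to τ_e^* for each e ∈ P; its inverse sends t_e to t_e^*. Concretely, the map w ↦ I ∘ w ∘ I^{-1}, where I : A(P) → J(P) is the bijection sending an antichain to the order ideal it generates, restricts to a group isomorphism Tog_A(P) → Tog_J(P). -/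
open scoped Classical

variable {P : Type*} [PartialOrder P]

section ToggleIso

variable {P : Type*} [PartialOrder P]

lemma covers_not_le {e a b : P} (ha : a ⋖ e) (hb : b ⋖ e) (hne : a ≠ b) : ¬ a ≤ b :=
  fun h => ha.2 (h.lt_of_ne hne) hb.1

lemma exists_cover_between [Fintype P] {x e : P} (h : x < e) : ∃ c, x ≤ c ∧ c ⋖ e := by
  obtain ⟨c, hxc, hmax⟩ := Finite.exists_le_maximal (p := fun y => y < e) h
  exact ⟨c, hxc, hmax.1, fun z hcz hze => absurd (hmax.2 hze hcz.le) hcz.not_ge⟩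

/-- "good" condition: `c` is incomparable to every non-cover element of `S`. -/
def goodFor (e : P) (S : Set P) (c : P) : Prop :=
  ∀ a ∈ S, ¬ a ⋖ e → ¬ a ≤ c ∧ ¬ c ≤ a

lemma goodFor_of_mem {e : P} (A : AntichainSub P) {c : P} (hc : c ⋖ e) (hcA : c ∈ A.1) :
    goodFor e A.1 c := fun a ha hna =>
  have hne : a ≠ c := fun h => hna (h ▸ hc)
  ⟨A.2 ha hcA hne, A.2 hcA ha hne.symm⟩

lemma atogPerm_apply (e : P) (A : AntichainSub P) : atogPerm e A = atogFun e A := rfl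

lemma prod_atog_carrier (e : P) (l : List P) (hl : l.Nodup) (hc : ∀ c ∈ l, c ⋖ e)
    (A : AntichainSub P) :
    (((l.map (atogPerm (P := P))).prod) A).1
      = (A.1 \ {x | x ∈ l}) ∪ {c | c ∈ l ∧ c ∉ A.1 ∧ goodFor e A.1 c} := by
  induction l with
  | nil => simp
  | cons c t ih =>
    obtain ⟨hct, hnd⟩ := List.nodup_cons.mp hl
    have hce : c ⋖ e := hc c List.mem_cons_self
    have hc' : ∀ x ∈ t, x ⋖ e := fun x hx => hc x (List.mem_cons_of_mem _ hx)
    have hS := ih hnd hc'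
    set S := ((t.map (atogPerm (P := P))).prod) A with hSdef
    rw [List.map_cons, List.prod_cons, Equiv.Perm.mul_apply]
    show (atogFun c S).1 = _
    by_cases hcA : c ∈ A.1
    · have hcS : c ∈ S.1 := by rw [hS]; exact Or.inl ⟨hcA, hct⟩
      simp only [atogFun]
      rw [dif_pos hcS]
      show S.1 \ {c} = _
      rw [hS]
      ext x
      simp only [Set.mem_diff, Set.mem_union, Set.mem_setOf_eq, Set.mem_singleton_iff,
        List.mem_cons]
      constructor
      · rintro ⟨h1 | h2, hne⟩
        · exact Or.inl ⟨h1.1, fun h => h.elim (fun h' => hne h') h1.2⟩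
        · exact Or.inr ⟨Or.inr h2.1, h2.2.1, h2.2.2⟩
      · rintro (⟨h1, h2⟩ | ⟨h1, h2, h3⟩)
        · exact ⟨Or.inl ⟨h1, fun h => h2 (Or.inr h)⟩, fun h => h2 (Or.inl h)⟩
        · refine ⟨Or.inr ⟨?_, h2, h3⟩, fun h => h2 (h ▸ hcA)⟩
          rcases h1 with h1 | h1
          · exact absurd (h1 ▸ hcA) h2
          · exact h1
    · have hcS : c ∉ S.1 := by
        rw [hS]
        rintro (⟨h1, _⟩ | ⟨h1, _, _⟩)
        · exact hcA h1
        · exact hct h1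
      simp only [atogFun]
      rw [dif_neg hcS]
      by_cases hg : goodFor e A.1 c
      · have hcov : ∀ y ∈ S.1, y ≠ c → ¬ y ≤ c ∧ ¬ c ≤ y := by
          intro y hy hne
          by_cases hye : y ⋖ e
          · exact ⟨covers_not_le hye hce hne, covers_not_le hce hye (Ne.symm hne)⟩
          · have hyA : y ∈ A.1 := by
              rw [hS] at hy
              rcases hy with ⟨h, _⟩ | ⟨h1, _, _⟩
              · exact h
              · exact absurd (hc' y h1) hye
            exact hg y hyA hye
        have hanti : IsAntichain (· ≤ ·) (insert c S.1) :=
          isAntichain_insert.mpr ⟨S.2, fun b hb hne =>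
            ⟨(hcov b hb (Ne.symm hne)).2, (hcov b hb (Ne.symm hne)).1⟩⟩
        rw [dif_pos hanti]
        show insert c S.1 = _
        rw [hS]
        ext x
        simp only [Set.mem_insert_iff, Set.mem_diff, Set.mem_union, Set.mem_setOf_eq,
          List.mem_cons]
        constructor
        · rintro (rfl | ⟨h1, h2⟩ | ⟨h1, h2, h3⟩)
          · exact Or.inr ⟨Or.inl rfl, hcA, hg⟩
          · exact Or.inl ⟨h1, fun h => h.elim (fun h' => hcA (h' ▸ h1)) h2⟩
          · exact Or.inr ⟨Or.inr h1, h2, h3⟩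
        · rintro (⟨h1, h2⟩ | ⟨rfl | h1, h2, h3⟩)
          · exact Or.inr (Or.inl ⟨h1, fun h => h2 (Or.inr h)⟩)
          · exact Or.inl rfl
          · exact Or.inr (Or.inr ⟨h1, h2, h3⟩)
      · have hnanti : ¬ IsAntichain (· ≤ ·) (insert c S.1) := by
          intro hanti
          apply hg
          intro a ha hna
          have haS : a ∈ S.1 := by
            rw [hS]
            exact Or.inl ⟨ha, fun h => hna (hc' a h)⟩
          have hne : a ≠ c := fun h => hna (h ▸ hce)
          exact ⟨hanti (Set.mem_insert_iff.mpr (Or.inr haS)) (Set.mem_insert c _) hne,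
            hanti (Set.mem_insert c _) (Set.mem_insert_iff.mpr (Or.inr haS)) hne.symm⟩
        rw [dif_neg hnanti]
        rw [hS]
        ext x
        simp only [Set.mem_diff, Set.mem_union, Set.mem_setOf_eq, List.mem_cons]
        constructor
        · rintro (⟨h1, h2⟩ | ⟨h1, h2, h3⟩)
          · exact Or.inl ⟨h1, fun h => h.elim (fun h' => hcA (h' ▸ h1)) h2⟩
          · exact Or.inr ⟨Or.inr h1, h2, h3⟩
        · rintro (⟨h1, h2⟩ | ⟨rfl | h1, h2, h3⟩)
          · exact Or.inl ⟨h1, fun h => h2 (Or.inr h)⟩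
          · exact absurd h3 hg
          · exact Or.inr ⟨h1, h2, h3⟩

variable [Fintype P]

noncomputable def coversList (e : P) : List P :=
  (Finset.univ.filter (fun c => c ⋖ e)).toList

lemma mem_coversList {e c : P} : c ∈ coversList e ↔ c ⋖ e := by
  simp [coversList]

lemma coversList_nodup (e : P) : (coversList e).Nodup := Finset.nodup_toList _

noncomputable def gl (e : P) : Equiv.Perm (AntichainSub P) :=
  ((coversList e).map (atogPerm (P := P))).prod

lemma gl_carrier (e : P) (A : AntichainSub P) :
    ((gl e) A).1 = (A.1 \ {c | c ⋖ e}) ∪ {c | c ⋖ e ∧ c ∉ A.1 ∧ goodFor e A.1 c} := by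
  rw [gl, prod_atog_carrier e _ (coversList_nodup e) (fun c hc => mem_coversList.mp hc)]
  have h1 : {x : P | x ∈ coversList e} = {c : P | c ⋖ e} := by
    ext x; exact mem_coversList
  rw [h1]
  congr 1
  ext x
  simp only [Set.mem_setOf_eq, mem_coversList]

lemma mem_gl_of_not_cover {e : P} {A : AntichainSub P} {a : P} (hna : ¬ a ⋖ e) :
    a ∈ ((gl e) A).1 ↔ a ∈ A.1 := by
  rw [gl_carrier]
  constructor
  · rintro (⟨h, _⟩ | ⟨h, _, _⟩)
    · exact h
    · exact absurd h hna
  · intro h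
    exact Or.inl ⟨h, hna⟩

lemma goodFor_gl {e : P} {A : AntichainSub P} {c : P} :
    goodFor e ((gl e) A).1 c ↔ goodFor e A.1 c := by
  constructor <;> intro h a ha hna
  · exact h a ((mem_gl_of_not_cover hna).mpr ha) hna
  · exact h a ((mem_gl_of_not_cover hna).mp ha) hna

lemma mem_gl_iff_of_cover {e : P} {A : AntichainSub P} {c : P} (hc : c ⋖ e) :
    c ∈ ((gl e) A).1 ↔ (c ∉ A.1 ∧ goodFor e A.1 c) := by
  rw [gl_carrier]
  constructor
  · rintro (⟨_, h2⟩ | ⟨_, h2, h3⟩)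
    · exact absurd hc h2
    · exact ⟨h2, h3⟩
  · intro h
    exact Or.inr ⟨hc, h.1, h.2⟩

lemma gl_gl (e : P) (A : AntichainSub P) : (gl e) ((gl e) A) = A := by
  apply Subtype.ext
  rw [gl_carrier]
  ext x
  simp only [Set.mem_union, Set.mem_diff, Set.mem_setOf_eq]
  by_cases hx : x ⋖ e
  · constructor
    · rintro (⟨_, h2⟩ | ⟨_, h1, h2⟩)
      · exact absurd hx h2
      · rw [mem_gl_iff_of_cover (A := A) hx] at h1
        push_neg at h1
        rw [goodFor_gl] at h2
        by_contra hxA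
        exact h1 hxA h2
    · intro hxA
      refine Or.inr ⟨hx, ?_, goodFor_gl.mpr (goodFor_of_mem A hx hxA)⟩
      rw [mem_gl_iff_of_cover (A := A) hx]
      rintro ⟨h1, _⟩
      exact h1 hxA
  · simp only [hx, false_and, or_false, not_false_iff, and_true]
    exact mem_gl_of_not_cover hx


noncomputable def maxOf (I : OrderIdealSub P) : AntichainSub P :=
  ⟨{m | Maximal (· ∈ I.1) m}, fun a ha b hb hne hab =>
    hne (le_antisymm hab (ha.2 hb.1 hab))⟩

lemma idealOf_maxOf (I : OrderIdealSub P) : idealOf (maxOf I) = I := by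
  apply Subtype.ext
  ext x
  constructor
  · rintro ⟨m, hm, hxm⟩
    exact I.2 hxm hm.1
  · intro hx
    obtain ⟨m, hxm, hm⟩ := Finite.exists_le_maximal (p := (· ∈ I.1)) hx
    exact ⟨m, hm, hxm⟩

lemma maxOf_idealOf (A : AntichainSub P) : maxOf (idealOf A) = A := by
  apply Subtype.ext
  ext m
  constructor
  · rintro ⟨⟨a, haA, hma⟩, hmax⟩
    have ham : a ≤ m := hmax ⟨a, haA, le_refl a⟩ hma
    rw [le_antisymm hma ham]
    exact haA
  · intro hm
    refine ⟨⟨m, hm, le_refl m⟩, ?_⟩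
    rintro y ⟨b, hbB, hyb⟩ hmy
    have hmb : m ≤ b := hmy.trans hyb
    rcases eq_or_ne m b with rfl | hne
    · exact hyb
    · exact absurd hmb (A.2 hm hbB hne)

noncomputable def antiEquiv (P : Type*) [PartialOrder P] [Fintype P] :
    AntichainSub P ≃ OrderIdealSub P where
  toFun := idealOf
  invFun := maxOf
  left_inv := maxOf_idealOf
  right_inv := idealOf_maxOf

lemma key_case (e : P) (A : AntichainSub P) :
    idealOf ((gl e) ((atogPerm e) ((gl e) A))) = togFun e (idealOf A) := by
  have hnee : ¬ e ⋖ e := fun h => lt_irrefl e h.1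
  by_cases heJ : ∃ a ∈ A.1, e ≤ a
  · by_cases heA : e ∈ A.1
    · -- Case 1a : e is a maximal element of the ideal
      have hAC : ∀ x ∈ A.1, ¬ x ⋖ e := fun x hx h =>
        A.2 hx heA (fun hh => lt_irrefl e (hh ▸ h.1)) h.1.le
      have hglA : (gl e) A = A := by
        apply Subtype.ext
        rw [gl_carrier]
        ext x
        simp only [Set.mem_union, Set.mem_diff, Set.mem_setOf_eq]
        constructor
        · rintro (⟨h, _⟩ | ⟨hx, _, hg⟩)
          · exact h
          · exact absurd hx.1.le (hg e heA hnee).2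
        · intro h
          exact Or.inl ⟨h, hAC x h⟩
      rw [hglA]
      have hM : (atogPerm e) A = ⟨A.1 \ {e}, A.2.subset Set.diff_subset⟩ := by
        rw [atogPerm_apply]
        simp only [atogFun]
        rw [dif_pos heA]
      rw [hM]
      set M : AntichainSub P := ⟨A.1 \ {e}, A.2.subset Set.diff_subset⟩ with hMdef
      have heI : e ∈ (idealOf A).1 := ⟨e, heA, le_refl e⟩
      have hlow : IsLowerSet ((idealOf A).1 \ {e}) := by
        intro u v hvu hu
        obtain ⟨⟨a', ha', hua'⟩, hune⟩ := hu
        refine ⟨⟨a', ha', hvu.trans hua'⟩, ?_⟩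
        intro hve
        have heu : e ≤ u := hve ▸ hvu
        rcases eq_or_ne e a' with h | hne
        · exact hune (le_antisymm (hua'.trans h.symm.le) heu)
        · exact A.2 heA ha' hne (heu.trans hua')
      have hRHS : togFun e (idealOf A) = ⟨(idealOf A).1 \ {e}, hlow⟩ := by
        simp only [togFun]
        rw [dif_pos heI, dif_pos hlow]
      rw [hRHS]
      apply Subtype.ext
      show {x | ∃ y ∈ ((gl e) M).1, x ≤ y} = (idealOf A).1 \ {e}
      have hMC : ∀ x ∈ M.1, ¬ x ⋖ e := fun x hx => hAC x hx.1
      ext x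
      simp only [Set.mem_setOf_eq, Set.mem_diff, Set.mem_singleton_iff]
      constructor
      · rintro ⟨y, hy, hxy⟩
        rw [gl_carrier] at hy
        rcases hy with (⟨⟨hyA, hyne⟩, _⟩ | ⟨hyc, _, _⟩)
        · refine ⟨⟨y, hyA, hxy⟩, ?_⟩
          rintro rfl
          exact A.2 heA hyA (fun h => hyne h.symm) hxy
        · refine ⟨⟨e, heA, hxy.trans hyc.1.le⟩, ?_⟩
          rintro rfl
          exact absurd hxy hyc.1.not_ge
      · rintro ⟨⟨a, haA, hxa⟩, hxne⟩
        rcases eq_or_ne a e with hae | hane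
        · -- x ≤ e, x ≠ e
          have hxe : x < e := lt_of_le_of_ne (hae ▸ hxa) hxne
          obtain ⟨c, hxc, hce⟩ := exists_cover_between hxe
          by_cases hex : ∃ a' ∈ A.1, a' ≠ e ∧ c ≤ a'
          · obtain ⟨a', ha', hane', hca'⟩ := hex
            exact ⟨a', (gl_carrier e M ▸ Or.inl ⟨⟨ha', hane'⟩, hAC a' ha'⟩), hxc.trans hca'⟩
          · push_neg at hex
            refine ⟨c, ?_, hxc⟩
            rw [gl_carrier]
            refine Or.inr ⟨hce, ?_, ?_⟩
            · rintro ⟨hcA, hcne⟩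
              exact hex c hcA hcne (le_refl c)
            · rintro a'' ⟨ha'', hane''⟩ _
              refine ⟨fun h => A.2 ha'' heA hane'' (h.trans hce.1.le), fun h => hex a'' ha'' hane'' h⟩
        · exact ⟨a, (gl_carrier e M ▸ Or.inl ⟨⟨haA, hane⟩, hAC a haA⟩), hxa⟩
    · -- Case 1b : e is in the ideal but not maximal
      obtain ⟨a0, ha0, hea0⟩ := heJ
      have helt : e < a0 := lt_of_le_of_ne hea0 (fun h => heA (h ▸ ha0))
      have hAC : ∀ x ∈ A.1, ¬ x ⋖ e := by
        intro x hx h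
        have : x < a0 := h.1.trans helt
        rcases eq_or_ne x a0 with rfl | hne
        · exact lt_irrefl x this
        · exact A.2 hx ha0 hne this.le
      have hglA : (gl e) A = A := by
        apply Subtype.ext
        rw [gl_carrier]
        ext x
        simp only [Set.mem_union, Set.mem_diff, Set.mem_setOf_eq]
        constructor
        · rintro (⟨h, _⟩ | ⟨hx, _, hg⟩)
          · exact h
          · exact absurd (hx.1.trans helt).le
              (hg a0 ha0 (fun h => lt_irrefl a0 (h.1.trans helt))).2
        · intro h
          exact Or.inl ⟨h, hAC x h⟩
      rw [hglA]
      have hnanti : ¬ IsAntichain (· ≤ ·) (insert e A.1) := fun h =>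
        h (Set.mem_insert e _) (Set.mem_insert_iff.mpr (Or.inr ha0))
          (fun hh => heA (hh ▸ ha0)) hea0
      have hM : (atogPerm e) A = A := by
        rw [atogPerm_apply]
        simp only [atogFun]
        rw [dif_neg heA, dif_neg hnanti]
      rw [hM, hglA]
      have heI : e ∈ (idealOf A).1 := ⟨a0, ha0, hea0⟩
      have hnlow : ¬ IsLowerSet ((idealOf A).1 \ {e}) := by
        intro h
        have ha0' : a0 ∈ (idealOf A).1 \ {e} :=
          ⟨⟨a0, ha0, le_refl a0⟩, fun hh => heA (hh ▸ ha0)⟩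
        exact (h hea0 ha0').2 rfl
      simp only [togFun]
      rw [dif_pos heI, dif_neg hnlow]
  · by_cases hall : ∀ x, x < e → ∃ a ∈ A.1, x ≤ a
    · -- Case 2a : e can be added to the ideal
      have heA : e ∉ A.1 := fun h => heJ ⟨e, h, le_refl e⟩
      have hcov_of_lt : ∀ a ∈ A.1, a < e → a ⋖ e := by
        intro a ha hae
        obtain ⟨c, hac, hce⟩ := exists_cover_between hae
        obtain ⟨a', ha', hca'⟩ := hall c hce.1
        have haa' : a ≤ a' := hac.trans hca'
        have : a = a' := by
          rcases eq_or_ne a a' with h | h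
          · exact h
          · exact absurd haa' (A.2 ha ha' h)
        subst this
        have : a = c := le_antisymm hac hca'
        exact this ▸ hce
      have hD : ∀ c, c ⋖ e → c ∉ A.1 → ¬ goodFor e A.1 c := by
        intro c hce hcA hg
        obtain ⟨a, ha, hca⟩ := hall c hce.1
        have hnac : ¬ a ⋖ e := fun h => covers_not_le hce h (fun hh => hcA (hh ▸ ha)) hca
        exact (hg a ha hnac).2 hca
      have hglA : ((gl e) A).1 = A.1 \ {c | c ⋖ e} := by
        rw [gl_carrier]
        ext x
        simp only [Set.mem_union, Set.mem_diff, Set.mem_setOf_eq]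
        constructor
        · rintro (h | ⟨h1, h2, h3⟩)
          · exact h
          · exact absurd h3 (hD x h1 h2)
        · exact Or.inl
      have heB : e ∉ ((gl e) A).1 := by
        rw [hglA]
        rintro ⟨h, _⟩
        exact heA h
      have hanti : IsAntichain (· ≤ ·) (insert e ((gl e) A).1) := by
        refine isAntichain_insert.mpr ⟨((gl e) A).2, ?_⟩
        rintro b hb hne
        rw [hglA] at hb
        obtain ⟨hbA, hbnc⟩ := hb
        constructor
        · intro heb
          exact heJ ⟨b, hbA, heb⟩
        · intro hbe
          exact hbnc (hcov_of_lt b hbA (lt_of_le_of_ne hbe (Ne.symm hne)))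
      have hM : (atogPerm e) ((gl e) A) = ⟨insert e ((gl e) A).1, hanti⟩ := by
        rw [atogPerm_apply]
        simp only [atogFun]
        rw [dif_neg heB, dif_pos hanti]
      rw [hM]
      set M : AntichainSub P := ⟨insert e ((gl e) A).1, hanti⟩ with hMdef
      have hMcar : M.1 = insert e (A.1 \ {c | c ⋖ e}) := by
        show insert e ((gl e) A).1 = _
        rw [hglA]
      -- final toggle does nothing
      have hfinal : ((gl e) M).1 = M.1 := by
        rw [gl_carrier]
        ext x
        simp only [Set.mem_union, Set.mem_diff, Set.mem_setOf_eq]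
        constructor
        · rintro (⟨h, _⟩ | ⟨h1, _, h3⟩)
          · exact h
          · exact absurd h1.1.le (h3 e (Set.mem_insert e _) hnee).2
        · intro h
          refine Or.inl ⟨h, ?_⟩
          rw [hMcar] at h
          rcases Set.mem_insert_iff.mp h with hxe | h
          · exact fun hc => hnee (hxe ▸ hc)
          · exact h.2
      have hlow : IsLowerSet (insert e (idealOf A).1) := by
        intro u v hvu hu
        rcases Set.mem_insert_iff.mp hu with hue | ⟨a', ha', hua'⟩
        · rcases eq_or_lt_of_le (show v ≤ e from hue ▸ hvu) with h | hlt
          · exact Set.mem_insert_iff.mpr (Or.inl h)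
          · exact Set.mem_insert_iff.mpr (Or.inr (hall v hlt))
        · exact Set.mem_insert_iff.mpr (Or.inr ⟨a', ha', hvu.trans hua'⟩)
      have heI : e ∉ (idealOf A).1 := heJ
      have hRHS : togFun e (idealOf A) = ⟨insert e (idealOf A).1, hlow⟩ := by
        simp only [togFun]
        rw [dif_neg heI, dif_pos hlow]
      rw [hRHS]
      apply Subtype.ext
      show {x | ∃ y ∈ ((gl e) M).1, x ≤ y} = insert e (idealOf A).1
      rw [hfinal, hMcar]
      ext x
      simp only [Set.mem_setOf_eq, Set.mem_insert_iff]
      constructor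
      · rintro ⟨y, hy, hxy⟩
        rcases Set.mem_insert_iff.mp hy with hye | ⟨hyA, _⟩
        · rcases eq_or_lt_of_le (show x ≤ e from hye ▸ hxy) with h | hlt
          · exact Or.inl h
          · exact Or.inr (hall x hlt)
        · exact Or.inr ⟨y, hyA, hxy⟩
      · rintro (hxe | ⟨a, ha, hxa⟩)
        · exact ⟨e, Or.inl rfl, hxe.le⟩
        · by_cases hac : a ⋖ e
          · exact ⟨e, Set.mem_insert e _, hxa.trans hac.1.le⟩
          · exact ⟨a, Set.mem_insert_iff.mpr (Or.inr ⟨ha, hac⟩), hxa⟩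
    · -- Case 2b : e cannot be added to the ideal
      push_neg at hall
      obtain ⟨x0, hx0e, hx0⟩ := hall
      have heA : e ∉ A.1 := fun h => heJ ⟨e, h, le_refl e⟩
      obtain ⟨c0, hx0c0, hc0e⟩ := exists_cover_between hx0e
      have hc0J : ∀ a ∈ A.1, ¬ c0 ≤ a := fun a ha h => hx0 a ha (hx0c0.trans h)
      have heB : e ∉ ((gl e) A).1 := by
        rw [gl_carrier]
        rintro (⟨h, _⟩ | ⟨h, _, _⟩)
        · exact heA h
        · exact hnee h
      have hnanti : ¬ IsAntichain (· ≤ ·) (insert e ((gl e) A).1) := by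
        intro h
        by_cases hg : goodFor e A.1 c0
        · have hc0B : c0 ∈ ((gl e) A).1 := by
            rw [gl_carrier]
            exact Or.inr ⟨hc0e, fun hc => hc0J c0 hc (le_refl c0), hg⟩
          exact h (Set.mem_insert_iff.mpr (Or.inr hc0B)) (Set.mem_insert e _)
            (fun hh => hnee (hh ▸ hc0e)) hc0e.1.le
        · simp only [goodFor, not_forall] at hg
          obtain ⟨a, ha, hna, hcmp⟩ := hg
          have hac0 : a ≤ c0 := by
            by_contra hn
            apply hcmp
            exact ⟨hn, fun hh => hc0J a ha hh⟩
          have haB : a ∈ ((gl e) A).1 := by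
            rw [gl_carrier]
            exact Or.inl ⟨ha, hna⟩
          have hane : a ≠ e := fun hh => heA (hh ▸ ha)
          exact h (Set.mem_insert_iff.mpr (Or.inr haB)) (Set.mem_insert e _)
            hane (hac0.trans hc0e.1.le)
      have hM : (atogPerm e) ((gl e) A) = (gl e) A := by
        rw [atogPerm_apply]
        simp only [atogFun]
        rw [dif_neg heB, dif_neg hnanti]
      rw [hM, gl_gl]
      have heI : e ∉ (idealOf A).1 := heJ
      have hnlow : ¬ IsLowerSet (insert e (idealOf A).1) := by
        intro h
        have := h hx0e.le (Set.mem_insert e _)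
        rcases Set.mem_insert_iff.mp this with rfl | hmem
        · exact lt_irrefl x0 hx0e
        · obtain ⟨a, ha, hxa⟩ := hmem
          exact hx0 a ha hxa
      simp only [togFun]
      rw [dif_neg heI, dif_neg hnlow]


noncomputable def conjM (P : Type*) [PartialOrder P] [Fintype P] :
    Equiv.Perm (AntichainSub P) ≃* Equiv.Perm (OrderIdealSub P) :=
  { Equiv.permCongr (antiEquiv P) with
    map_mul' := fun f g => by
      ext x
      simp [Equiv.permCongr_apply, Equiv.Perm.mul_apply, Equiv.symm_apply_apply] }

lemma conjM_tog (e : P) : conjM P (gl e * atogPerm e * gl e) = togPerm e := by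
  apply Equiv.ext
  intro I
  have h := key_case e ((antiEquiv P).symm I)
  have h2 : idealOf ((antiEquiv P).symm I) = I := (antiEquiv P).apply_symm_apply I
  show idealOf ((gl e) ((atogPerm e) ((gl e) ((antiEquiv P).symm I)))) = togFun e I
  rw [h, h2]

lemma gl_mem (e : P) : gl e ∈ Subgroup.closure (Set.range (atogPerm (P := P))) := by
  show ((coversList e).map (atogPerm (P := P))).prod ∈ _
  apply Subgroup.list_prod_mem
  intro x hx
  obtain ⟨c, _, rfl⟩ := List.mem_map.mp hx
  exact Subgroup.subset_closure ⟨c, rfl⟩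

lemma mem_GJ (e : P) :
    conjM P (atogPerm e) ∈ Subgroup.closure (Set.range (togPerm (P := P))) := by
  have wf : WellFounded ((· < ·) : P → P → Prop) := (Finite.to_wellFoundedLT (α := P)).wf
  refine wf.induction
    (C := fun e => conjM P (atogPerm e) ∈ Subgroup.closure (Set.range (togPerm (P := P)))) e ?_
  intro e ih
  have h1 : togPerm e = conjM P (gl e) * conjM P (atogPerm e) * conjM P (gl e) := by
    rw [← map_mul, ← map_mul, conjM_tog e]
  have h2 : conjM P (atogPerm e)
      = (conjM P (gl e))⁻¹ * togPerm e * (conjM P (gl e))⁻¹ := by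
    rw [h1]; group
  have hglmem : conjM P (gl e) ∈ Subgroup.closure (Set.range (togPerm (P := P))) := by
    have hprod : conjM P (gl e)
        = (((coversList e).map (atogPerm (P := P))).map (conjM P)).prod := by
      rw [gl]
      exact map_list_prod (conjM P) _
    rw [hprod]
    apply Subgroup.list_prod_mem
    intro x hx
    simp only [List.mem_map] at hx
    obtain ⟨y, ⟨cc, hc, rfl⟩, rfl⟩ := hx
    exact ih cc (mem_coversList.mp hc).1
  rw [h2]
  exact mul_mem (mul_mem (inv_mem hglmem) (Subgroup.subset_closure ⟨e, rfl⟩))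
    (inv_mem hglmem)

lemma map_eq_GJ :
    (Subgroup.closure (Set.range (atogPerm (P := P)))).map
        ((conjM P : Equiv.Perm (AntichainSub P) →* Equiv.Perm (OrderIdealSub P)))
      = Subgroup.closure (Set.range (togPerm (P := P))) := by
  rw [MonoidHom.map_closure]
  apply le_antisymm
  · rw [Subgroup.closure_le]
    rintro x ⟨y, ⟨c, rfl⟩, rfl⟩
    exact mem_GJ c
  · rw [Subgroup.closure_le]
    rintro x ⟨c, rfl⟩
    have h1 : gl c * atogPerm c * gl c ∈ Subgroup.closure (Set.range (atogPerm (P := P))) :=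
      mul_mem (mul_mem (gl_mem c) (Subgroup.subset_closure ⟨c, rfl⟩)) (gl_mem c)
    have h2 : togPerm c ∈ (Subgroup.closure (Set.range (atogPerm (P := P)))).map
        ((conjM P : Equiv.Perm (AntichainSub P) →* Equiv.Perm (OrderIdealSub P))) := by
      refine ⟨_, h1, ?_⟩
      show conjM P (gl c * atogPerm c * gl c) = togPerm c
      exact conjM_tog c
    rwa [MonoidHom.map_closure] at h2


end ToggleIso

/-- The map `w ↦ I ∘ w ∘ I⁻¹`, where `I : A(P) → J(P)` sends an antichain to the order
ideal it generates, restricts to a group isomorphism from the antichain toggle group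
`Tog_A(P)` to the order ideal toggle group `Tog_J(P)`. -/
theorem toggle_groups_isomorphic
    (P : Type*) [PartialOrder P] [Fintype P] :
    ∃ φ : Subgroup.closure (Set.range (atogPerm (P := P))) ≃*
        Subgroup.closure (Set.range (togPerm (P := P))),
      ∀ (w : Subgroup.closure (Set.range (atogPerm (P := P)))) (A : AntichainSub P),
        idealOf ((w : Equiv.Perm (AntichainSub P)) A)
          = (φ w : Equiv.Perm (OrderIdealSub P)) (idealOf A) := by
  classical
  refine ⟨((conjM P).subgroupMap _).trans (MulEquiv.subgroupCongr map_eq_GJ), ?_⟩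
  intro w A
  show (antiEquiv P) ((w : Equiv.Perm (AntichainSub P)) A)
      = (conjM P (w : Equiv.Perm (AntichainSub P))) ((antiEquiv P) A)
  show (antiEquiv P) ((w : Equiv.Perm (AntichainSub P)) A)
      = (antiEquiv P) ((w : Equiv.Perm (AntichainSub P))
          ((antiEquiv P).symm ((antiEquiv P) A)))
  rw [Equiv.symm_apply_apply]
end

section
/- Let P be a finite graded poset and e ∈ P with rk(e) = i. Then t_e^* = τ_{rk=i−1} ∘ τ_e ∘ τ_{rk=i−1} and t_{rk=i}^* = τ_{rk=i−1} ∘ τ_{rk=i} ∘ τ_{rk=i−1}, where τ_{rk=−1} is interpreted as the identity. -/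
open scoped Classical

variable {P : Type*} [PartialOrder P]

def ACond (a : P) (S : Set P) : Prop := ∀ c ∈ S, a ≠ c → ¬ a ≤ c ∧ ¬ c ≤ a

lemma ach_insert_iff (a : P) (A : AntichainSub P) :
    IsAntichain (· ≤ ·) (insert a A.1) ↔ ACond a A.1 := by
  rw [isAntichain_insert]
  exact ⟨fun h c hc => h.2 hc, fun h => ⟨A.2, fun c hc => h c hc⟩⟩

lemma mem_atog (a x : P) (A : AntichainSub P) :
    x ∈ (atogFun a A).1 ↔ (x ≠ a ∧ x ∈ A.1) ∨ (x = a ∧ a ∉ A.1 ∧ ACond a A.1) := by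
  unfold atogFun
  by_cases h : a ∈ A.1
  · rw [dif_pos h]
    constructor
    · rintro ⟨hx, hxa⟩; exact Or.inl ⟨hxa, hx⟩
    · rintro (⟨hxa, hx⟩ | ⟨_, ha, _⟩)
      · exact ⟨hx, hxa⟩
      · exact absurd h ha
  · rw [dif_neg h]
    by_cases h2 : IsAntichain (· ≤ ·) (insert a A.1)
    · rw [dif_pos h2]
      have hc : ACond a A.1 := (ach_insert_iff a A).1 h2
      constructor
      · rintro (rfl | hx)
        · exact Or.inr ⟨rfl, h, hc⟩
        · by_cases hxa : x = a
          · exact Or.inr ⟨hxa, h, hc⟩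
          · exact Or.inl ⟨hxa, hx⟩
      · rintro (⟨_, hx⟩ | ⟨rfl, _, _⟩)
        · exact Set.mem_insert_of_mem _ hx
        · exact Set.mem_insert _ _
    · rw [dif_neg h2]
      have hc : ¬ ACond a A.1 := fun hcc => h2 ((ach_insert_iff a A).2 hcc)
      constructor
      · intro hx
        refine Or.inl ⟨?_, hx⟩
        rintro rfl; exact h hx
      · rintro (⟨_, hx⟩ | ⟨_, _, hcc⟩)
        · exact hx
        · exact absurd hcc hc

lemma atog_comm {a b : P} (hab : ¬ a ≤ b) (hba : ¬ b ≤ a) :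
    atogFun a ∘ atogFun b = atogFun (P := P) b ∘ atogFun a := by
  have hne : a ≠ b := fun h => hab (le_of_eq h)
  have hmem : ∀ (u v : P), ¬ u ≤ v → ¬ v ≤ u → ∀ (A : AntichainSub P) (x : P), x ≠ v →
      (x ∈ (atogFun v A).1 ↔ x ∈ A.1) := by
    intro u v _ _ A x hxv
    rw [mem_atog]
    simp [hxv]
  have hcond : ∀ (u v : P), ¬ u ≤ v → ¬ v ≤ u → ∀ (A : AntichainSub P),
      ACond u (atogFun v A).1 ↔ ACond u A.1 := by
    intro u v huv hvu A
    constructor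
    · intro h c hc hcu
      by_cases hcv : c = v
      · subst hcv; exact ⟨huv, hvu⟩
      · exact h c ((hmem u v huv hvu A c hcv).2 hc) hcu
    · intro h c hc hcu
      by_cases hcv : c = v
      · subst hcv; exact ⟨huv, hvu⟩
      · exact h c ((hmem u v huv hvu A c hcv).1 hc) hcu
  funext A
  apply Subtype.ext
  ext x
  simp only [Function.comp_apply]
  simp only [mem_atog, hcond a b hab hba A, hcond b a hba hab A]
  by_cases hxa : x = a <;> by_cases hxb : x = b
  · exact absurd (hxa ▸ hxb) hne
  · subst hxa; simp only [hne]; tauto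
  · subst hxb; simp only [hne.symm]; tauto
  · simp only [hxa, hxb]; tauto


lemma listComp_eq_prod {α : Type*} (fs : List (α → α)) :
    listComp fs = (show List (Function.End α) from fs).prod := by
  induction fs with
  | nil => rfl
  | cons f l ih =>
    show f ∘ listComp l = _
    rw [ih]
    rfl

lemma prod_sq_one {M : Type*} [Monoid M] (l : List M) (hp : l.Pairwise Commute)
    (hinv : ∀ x ∈ l, x * x = 1) : l.prod * l.prod = 1 := by
  induction l with
  | nil => simp
  | cons x l ih =>
    rw [List.pairwise_cons] at hp
    have hx : Commute x l.prod := Commute.list_prod_right _ _ hp.1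
    have ihh := ih hp.2 (fun y hy => hinv y (List.mem_cons_of_mem _ hy))
    rw [List.prod_cons]
    calc x * l.prod * (x * l.prod) = x * (l.prod * x) * l.prod := by
          rw [mul_assoc, mul_assoc, mul_assoc]
      _ = x * x * (l.prod * l.prod) := by rw [← hx.eq, ← mul_assoc, mul_assoc x x, ← mul_assoc, mul_assoc (x*x)]
      _ = 1 := by rw [hinv x (List.mem_cons_self), ihh, one_mul]

lemma conj_helper {M : Type*} [Monoid M] {c r t : M} (hrr : r * r = 1)
    (hrt : r * t = t * r) (hrc : r * c = c * r) :
    c * r * (t * (c * r)) = c * (t * c) := by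
  calc c * r * (t * (c * r)) = c * (r * t * (c * r)) := by
        rw [mul_assoc c r _, ← mul_assoc r t _]
    _ = c * (t * (r * c * r)) := by rw [hrt, mul_assoc t, ← mul_assoc r c r]
    _ = c * (t * (c * (r * r))) := by rw [hrc, mul_assoc]
    _ = c * (t * c) := by rw [hrr, mul_one]

lemma prod_conj {M : Type*} [Monoid M] (J : M) (hJJ : J * J = 1) (l : List M) :
    (l.map (fun t => J * (t * J))).prod = J * (l.prod * J) := by
  induction l with
  | nil => simp [hJJ]
  | cons t l ih =>
    rw [List.map_cons, List.prod_cons, ih, List.prod_cons]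
    calc J * (t * J) * (J * (l.prod * J)) = J * (t * (J * J * (l.prod * J))) := by
          simp only [mul_assoc]
      _ = J * (t * l.prod * J) := by rw [hJJ, one_mul, mul_assoc]

lemma rk_lt_of_lt [Fintype P] (rk : P → ℕ)
    (hrkcov : ∀ x y : P, x ⋖ y → rk y = rk x + 1) :
    ∀ {x y : P}, x < y → rk x < rk y := by
  suffices h : ∀ y x : P, x < y → rk x < rk y from fun {x y} => h y x
  have wf : WellFounded ((· < ·) : P → P → Prop) := (Finite.to_wellFoundedLT).wf
  intro y
  refine wf.induction (C := fun y => ∀ x, x < y → rk x < rk y) y ?_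
  intro y ih x hxy
  obtain ⟨z, hzS, hzmax⟩ := Set.Finite.exists_maximalFor id {z : P | x ≤ z ∧ z < y}
    (Set.toFinite _) ⟨x, le_refl x, hxy⟩
  have hcov : z ⋖ y := by
    refine ⟨hzS.2, fun w hzw hwy => ?_⟩
    exact hzw.ne (le_antisymm hzw.le (hzmax ⟨hzS.1.trans hzw.le, hwy⟩ hzw.le))
  have hry := hrkcov z y hcov
  rcases eq_or_lt_of_le hzS.1 with rfl | hxz
  · omega
  · have := ih z hzS.2 x hxz
    omega

noncomputable def atogEnd (x : P) : Function.End (AntichainSub P) := atogFun x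

lemma atog_commute {a b : P} (hab : ¬ a ≤ b) (hba : ¬ b ≤ a) :
    Commute (atogEnd a) (atogEnd b) :=
  show atogFun a ∘ atogFun b = atogFun b ∘ atogFun a from atog_comm hab hba

/-- In a finite graded poset, for `e` of rank `i`:
`t_e^* = τ_{rk=i-1} ∘ τ_e ∘ τ_{rk=i-1}` and
`t_{rk=i}^* = τ_{rk=i-1} ∘ τ_{rk=i} ∘ τ_{rk=i-1}` (with `τ_{rk=-1} = id`).
Here `cov x` enumerates the elements covered by `x`,
`t_x^* = τ_{cov x} ∘ τ_x ∘ τ_{cov x}`, `L i` enumerates the elements of rank `i`,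
and `t_{rk=i}^*` is the composition of the `t_x^*` over elements `x` of rank `i`. -/
theorem tStar_eq_rank_toggle_conj
    (P : Type*) [PartialOrder P] [Fintype P] (rk : P → ℕ) (r : ℕ)
    (hrk0 : ∀ x : P, IsMin x → rk x = 0)
    (hrkcov : ∀ x y : P, x ⋖ y → rk y = rk x + 1)
    (hrkmax : ∀ x : P, IsMax x → rk x = r)
    (L : ℕ → List P) (hL : ∀ i, (L i).Nodup ∧ ∀ x : P, x ∈ L i ↔ rk x = i)
    (cov : P → List P)
    (hcov : ∀ x : P, (cov x).Nodup ∧ ∀ z : P, z ∈ cov x ↔ z ⋖ x)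
    (e : P) :
    (listComp ((cov e).map atogFun) ∘ atogFun e ∘ listComp ((cov e).map atogFun)
      = (if rk e = 0 then id else listComp ((L (rk e - 1)).map atogFun)) ∘ atogFun e ∘
        (if rk e = 0 then id else listComp ((L (rk e - 1)).map atogFun))) ∧
    (listComp ((L (rk e)).map fun x =>
        listComp ((cov x).map atogFun) ∘ atogFun x ∘ listComp ((cov x).map atogFun))
      = (if rk e = 0 then id else listComp ((L (rk e - 1)).map atogFun)) ∘
          listComp ((L (rk e)).map atogFun) ∘
        (if rk e = 0 then id else listComp ((L (rk e - 1)).map atogFun))) := by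
  have hlt : ∀ {x y : P}, x < y → rk x < rk y := rk_lt_of_lt rk hrkcov
  have hincomp_rank : ∀ a b : P, rk b ≤ rk a → a ≠ b → ¬ a ≤ b := by
    intro a b hr hne hle
    rcases lt_or_eq_of_le hle with h | h
    · exact absurd (hlt h) (by omega)
    · exact hne h
  have hcovrk : ∀ x z : P, z ∈ cov x → rk x = rk z + 1 :=
    fun x z hz => hrkcov z x (((hcov x).2 z).1 hz)
  have hcov_of : ∀ x z : P, rk x = rk z + 1 → z < x → z ∈ cov x := by
    intro x z hr hzx
    refine ((hcov x).2 z).2 ⟨hzx, fun w hzw hwx => ?_⟩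
    have h1 := hlt hzw; have h2 := hlt hwx; omega
  let τ : P → Function.End (AntichainSub P) := fun x => atogEnd x
  let F : List P → Function.End (AntichainSub P) := fun l => (l.map τ).prod
  have hF : ∀ l : List P, listComp (l.map atogFun) = F l := fun l => listComp_eq_prod _
  have hcomm : ∀ a b : P, rk a = rk b → Commute (τ a) (τ b) := by
    intro a b hr
    rcases eq_or_ne a b with rfl | hne
    · exact Commute.refl _
    · exact atog_commute (hincomp_rank a b hr.ge hne) (hincomp_rank b a hr.le hne.symm)
  have hinvol : ∀ x : P, τ x * τ x = 1 := fun x => (atogFun_involutive x).comp_self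
  have hpair : ∀ (l : List P) (j : ℕ), (∀ x ∈ l, rk x = j) → (l.map τ).Pairwise Commute := by
    intro l j hj
    rw [List.pairwise_map]
    exact List.pairwise_of_forall_mem_list
      fun a ha b hb => hcomm a b ((hj a ha).trans (hj b hb).symm)
  have hsq : ∀ (l : List P) (j : ℕ), (∀ x ∈ l, rk x = j) → F l * F l = 1 := by
    intro l j hj
    refine prod_sq_one _ (hpair l j hj) ?_
    intro f hf
    obtain ⟨x, hx, rfl⟩ := List.mem_map.1 hf
    exact hinvol x
  have key : rk e ≠ 0 → ∀ x : P, rk x = rk e →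
      F (cov x) * (τ x * F (cov x)) = F (L (rk e - 1)) * (τ x * F (L (rk e - 1))) := by
    intro h0 x hx
    set rest := (L (rk e - 1)).filter (fun z => decide (z ∉ cov x)) with hrest
    have hmem_rest : ∀ z, z ∈ rest ↔ z ∈ L (rk e - 1) ∧ z ∉ cov x := by
      intro z; simp [hrest, List.mem_filter]
    have hcov_sub : ∀ z ∈ cov x, z ∈ L (rk e - 1) := by
      intro z hz
      have := hcovrk x z hz
      exact ((hL (rk e - 1)).2 z).2 (by omega)
    have hrk_rest : ∀ z ∈ rest, rk z = rk e - 1 :=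
      fun z hz => ((hL (rk e - 1)).2 z).1 ((hmem_rest z).1 hz).1
    have hrk_cov : ∀ z ∈ cov x, rk z = rk e - 1 := by
      intro z hz; have := hcovrk x z hz; omega
    have hnd : (cov x ++ rest).Nodup := by
      rw [List.nodup_append]
      exact ⟨(hcov x).1, (hL (rk e - 1)).1.filter _,
        fun z hz w hw hzw => by subst hzw; exact ((hmem_rest z).1 hw).2 hz⟩
    have hperm : List.Perm (L (rk e - 1)) (cov x ++ rest) := by
      refine (List.perm_ext_iff_of_nodup (hL (rk e - 1)).1 hnd).2 ?_
      intro z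
      constructor
      · intro hz
        by_cases hzc : z ∈ cov x
        · exact List.mem_append.2 (Or.inl hzc)
        · exact List.mem_append.2 (Or.inr ((hmem_rest z).2 ⟨hz, hzc⟩))
      · intro hz
        rcases List.mem_append.1 hz with h | h
        · exact hcov_sub z h
        · exact ((hmem_rest z).1 h).1
    have hJsplit : F (L (rk e - 1)) = F (cov x) * F rest := by
      have h1 : ((L (rk e - 1)).map τ).prod = ((cov x ++ rest).map τ).prod :=
        (hperm.map τ).prod_eq' (hpair _ (rk e - 1) (fun z hz => ((hL (rk e - 1)).2 z).1 hz))
      show ((L (rk e - 1)).map τ).prod = _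
      rw [h1, List.map_append, List.prod_append]
    have hincomp_x : ∀ z ∈ rest, Commute (τ z) (τ x) := by
      intro z hz
      have h1 : rk z = rk e - 1 := hrk_rest z hz
      have hne : z ≠ x := by intro h; subst h; omega
      refine atog_commute ?_ ?_
      · intro hle
        rcases lt_or_eq_of_le hle with hlt' | h
        · exact ((hmem_rest z).1 hz).2 (hcov_of x z (by omega) hlt')
        · exact hne h
      · exact hincomp_rank x z (by omega) hne.symm
    have hRt : F rest * τ x = τ x * F rest := by
      refine ((Commute.list_prod_right _ (τ x) ?_).symm).eq
      intro f hf
      obtain ⟨z, hz, rfl⟩ := List.mem_map.1 hf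
      exact (hincomp_x z hz).symm
    have hRC : F rest * F (cov x) = F (cov x) * F rest := by
      have h : ∀ f ∈ (cov x).map τ, Commute (F rest) f := by
        intro f hf
        obtain ⟨w, hw, rfl⟩ := List.mem_map.1 hf
        refine (Commute.list_prod_right _ (τ w) ?_).symm
        intro g hg
        obtain ⟨z, hz, rfl⟩ := List.mem_map.1 hg
        exact hcomm w z (by rw [hrk_cov w hw, hrk_rest z hz])
      exact (Commute.list_prod_right _ (F rest) h).eq
    have hrr : F rest * F rest = 1 := hsq rest (rk e - 1) hrk_rest
    rw [hJsplit]
    exact (conj_helper hrr hRt hRC).symm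
  constructor
  · by_cases h0 : rk e = 0
    · rw [if_pos h0]
      have hce : cov e = [] := List.eq_nil_iff_forall_not_mem.2
        (fun z hz => by have := hcovrk e z hz; omega)
      rw [hce]
      rfl
    · rw [if_neg h0, hF (cov e), hF (L (rk e - 1))]
      exact key h0 e rfl
  · by_cases h0 : rk e = 0
    · rw [if_pos h0]
      have hmap : (L (rk e)).map (fun x =>
          listComp ((cov x).map atogFun) ∘ atogFun x ∘ listComp ((cov x).map atogFun))
          = (L (rk e)).map atogFun := by
        refine List.map_congr_left ?_
        intro x hx
        have hrx : rk x = rk e := ((hL (rk e)).2 x).1 hx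
        have hcx : cov x = [] := List.eq_nil_iff_forall_not_mem.2
          (fun z hz => by have := hcovrk x z hz; omega)
        rw [hcx]
        rfl
      rw [hmap]
      rfl
    · rw [if_neg h0]
      have hmap : (L (rk e)).map (fun x =>
          listComp ((cov x).map atogFun) ∘ atogFun x ∘ listComp ((cov x).map atogFun))
          = (L (rk e)).map (fun x =>
            (F (L (rk e - 1)) : AntichainSub P → AntichainSub P) ∘ atogFun x ∘ F (L (rk e - 1))) := by
        refine List.map_congr_left ?_
        intro x hx
        have hrx : rk x = rk e := ((hL (rk e)).2 x).1 hx
        rw [hF (cov x)]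
        exact key h0 x hrx
      rw [hmap, hF (L (rk e)), hF (L (rk e - 1)), listComp_eq_prod]
      have hJJ : F (L (rk e - 1)) * F (L (rk e - 1)) = 1 :=
        hsq _ (rk e - 1) (fun z hz => ((hL (rk e - 1)).2 z).1 hz)
      have hpc := prod_conj (F (L (rk e - 1))) hJJ ((L (rk e)).map τ)
      rw [List.map_map] at hpc
      exact hpc
end
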